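/- arXiv:1812.08510 — 2 statements merged into one kernel-verified Lean document; each statement's English description precedes it below -/
import Mathlib

section
/- Let G be a connected bipartite multigraph embedded on an orientable surface of genus g, with bipartition classes V_1 and V_2 where |V_1| = 1 and every vertex of V_2 has degree at least 2. Fix k ≥ 3 and let i be the number of faces of size less than 2k. If at most one face has size 2, then i ≥ (k-1)/(k-2) - (2k/(k-2))·g + |V_2|. -/
/-- A connected oriented combinatorial embedding of a (multi)graph, given by a
finite set of darts (directed edges), a rotation permutation `σ` (next dart in
the cyclic order around the tail vertex) and a fixed-point-free involution `α`
(dart reversal). -/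
structure EmbGraph where
  D : Type
  finD : Finite D
  σ : Equiv.Perm D
  α : Equiv.Perm D
  α_invol : ∀ d, α (α d) = d
  α_ne : ∀ d, α d ≠ d

namespace EmbGraph

variable (G : EmbGraph)

instance : Finite G.D := G.finD

/-- The setoid identifying darts in a common cycle of a permutation. -/
def sameCycleSetoid (f : Equiv.Perm G.D) : Setoid G.D :=
  ⟨f.SameCycle, ⟨fun _ => Equiv.Perm.SameCycle.refl f _, fun h => h.symm, fun h h' => h.trans h'⟩⟩

/-- The face permutation: the successor of the directed edge `(u,v)` in its
facial walk is the next edge after `(v,u)` in the rotation around `v`. -/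
def facePerm : Equiv.Perm G.D := G.σ * G.α

/-- Vertices are the orbits of `σ`. -/
def Vert := Quotient (G.sameCycleSetoid G.σ)
/-- Edges are the orbits of `α`. -/
def Edge := Quotient (G.sameCycleSetoid G.α)
/-- Faces are the orbits of the face permutation. -/
def Face := Quotient (G.sameCycleSetoid G.facePerm)

/-- The tail vertex of a dart. -/
def vtx (d : G.D) : G.Vert := Quotient.mk (G.sameCycleSetoid G.σ) d
def edgeOf (d : G.D) : G.Edge := Quotient.mk (G.sameCycleSetoid G.α) d
def faceOf (d : G.D) : G.Face := Quotient.mk (G.sameCycleSetoid G.facePerm) d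

instance : Finite G.Vert := Quotient.finite _
instance : Finite G.Edge := Quotient.finite _
instance : Finite G.Face := Quotient.finite _

noncomputable def numVertices : ℕ := Nat.card G.Vert
noncomputable def numEdges : ℕ := Nat.card G.Edge
noncomputable def numFaces : ℕ := Nat.card G.Face

/-- The Euler characteristic `v - e + f`; the genus `g` of the embedding is
defined by `v - e + f = 2 - 2g`. -/
noncomputable def eulerChar : ℤ := (G.numVertices : ℤ) - (G.numEdges : ℤ) + (G.numFaces : ℤ)

/-- The embedded graph is connected. -/
def Connected : Prop :=
  ∀ a b : G.D, Relation.EqvGen (fun x y => y = G.σ x ∨ y = G.α x) a b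

/-- The degree of a vertex: the number of darts with this tail. -/
noncomputable def degree (v : G.Vert) : ℕ := Nat.card {d : G.D // G.vtx d = v}

/-- The size of a face: the number of darts in its facial walk. -/
noncomputable def faceSize (f : G.Face) : ℕ := Nat.card {d : G.D // G.faceOf d = f}

/-- The underlying simple graph of the embedded graph. -/
def underlying : SimpleGraph G.Vert where
  Adj u v := u ≠ v ∧ ∃ d, G.vtx d = u ∧ G.vtx (G.α d) = v
  symm := ⟨by
    rintro u v ⟨huv, d, hd1, hd2⟩
    exact ⟨huv.symm, G.α d, hd2, by rw [G.α_invol]; exact hd1⟩⟩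
  loopless := ⟨fun v h => h.1 rfl⟩

/-- The embedded graph is a simple graph: no loops and no multiple edges. -/
def IsSimple : Prop :=
  (∀ d, G.vtx d ≠ G.vtx (G.α d)) ∧
    ∀ d d', G.vtx d = G.vtx d' → G.vtx (G.α d) = G.vtx (G.α d') → G.edgeOf d = G.edgeOf d'

/-- The dual graph: vertices are the faces of `G`, two faces being adjacent
if they share an edge. -/
def dualGraph : SimpleGraph G.Face where
  Adj f f' := f ≠ f' ∧ ∃ d, G.faceOf d = f ∧ G.faceOf (G.α d) = f'
  symm := ⟨by
    rintro f f' ⟨hff, d, hd1, hd2⟩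
    exact ⟨hff.symm, G.α d, hd2, by rw [G.α_invol]; exact hd1⟩⟩
  loopless := ⟨fun f h => h.1 rfl⟩

/-- The dual (multi)graph is simple: no face shares an edge with itself, and no
two faces share more than one edge. -/
def DualSimple : Prop :=
  (∀ d, G.faceOf d ≠ G.faceOf (G.α d)) ∧
    ∀ d d', G.faceOf d = G.faceOf d' → G.faceOf (G.α d) = G.faceOf (G.α d') →
      G.edgeOf d = G.edgeOf d'

/-- The dual embedded graph. -/
def dualMap : EmbGraph :=
  ⟨G.D, G.finD, G.σ * G.α, G.α, G.α_invol, G.α_ne⟩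

/-- Identifying the angle following dart `a` with the angle following dart `b`:
the rotation is composed with the transposition of `a` and `b`. -/
noncomputable def identifyAngles (a b : G.D) : EmbGraph :=
  letI : DecidableEq G.D := Classical.decEq _
  ⟨G.D, G.finD, G.σ * Equiv.swap a b, G.α, G.α_invol, G.α_ne⟩

/-- The H-operation applied to the edge given by the dart `d = (x,y)`, where
`x` and `y` have degree `3`.  With rotations `y,w',v` around `x` and `x,w,v'`
around `y`, it identifies the angle of `v` preceding `x` with the angle of `v'`
preceding `y`, and the angle of `w` following `y` with the angle of `w'`
following `x`, merging `v` with `v'` and `w` with `w'`. -/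
noncomputable def Hop (d : G.D) : EmbGraph :=
  (G.identifyAngles (G.σ⁻¹ (G.α (G.σ (G.σ d)))) (G.σ⁻¹ (G.α (G.σ (G.σ (G.α d)))))).identifyAngles
    (G.α (G.σ (G.α d))) (G.α (G.σ d))

end EmbGraph

/-- `S` is a vertex cut-set of `H`: deleting `S` leaves two vertices with no
path between them. -/
def IsCutSet {W : Type*} (H : SimpleGraph W) (S : Set W) : Prop :=
  ∃ a b : ↥(Sᶜ), ¬ (H.induce Sᶜ).Reachable a b

/-- `H` is `n`-connected: it has more than `n` vertices and no cut-set with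
fewer than `n` vertices. -/
def KConnected {W : Type*} (n : ℕ) (H : SimpleGraph W) : Prop :=
  n < Nat.card W ∧ ∀ S : Set W, S.ncard < n → ¬ IsCutSet H S

/-- The set of genera `s` for which a simple `c`-connected embedded graph of
genus `s` with a simple dual having a vertex cut of size `k` exists. -/
def deltaSet (k c : ℕ) : Set ℕ :=
  {s | ∃ G : EmbGraph, G.Connected ∧ G.IsSimple ∧ KConnected c G.underlying ∧
      G.eulerChar = 2 - 2 * (s : ℤ) ∧ G.DualSimple ∧
      ∃ S : Set G.Face, S.ncard = k ∧ IsCutSet G.dualGraph S}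

/-- `δ_k(c)`: the minimum genus of a simple `c`-connected embedded graph whose
simple dual has a vertex cut of size `k`. -/
noncomputable def delta (k c : ℕ) : ℕ := sInf (deltaSet k c)



section Aux

open Finset

private lemma mySumFiber {α β : Type*} [Fintype α] [Fintype β] (φ : α → β) :
    ∑ b : β, Nat.card {a // φ a = b} = Nat.card α := by
  classical
  simp_rw [Nat.card_eq_fintype_card]
  rw [← Fintype.card_sigma]
  exact Fintype.card_congr (Equiv.sigmaFiberEquiv φ)

private lemma myCardPartition {α : Type*} [Finite α] (P Q : α → Prop) :
    Nat.card {a // P a} = Nat.card {a // P a ∧ Q a} + Nat.card {a // P a ∧ ¬ Q a} := by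
  classical
  have e1 : {a // P a} ≃ {x : {a // P a} // Q x.1} ⊕ {x : {a // P a} // ¬ Q x.1} :=
    (Equiv.sumCompl (fun x : {a // P a} => Q x.1)).symm
  have e2 : {x : {a // P a} // Q x.1} ≃ {a // P a ∧ Q a} :=
    Equiv.subtypeSubtypeEquivSubtypeInter P Q
  have e3 : {x : {a // P a} // ¬ Q x.1} ≃ {a // P a ∧ ¬ Q a} :=
    Equiv.subtypeSubtypeEquivSubtypeInter P (fun a => ¬ Q a)
  rw [Nat.card_congr e1, Nat.card_sum, Nat.card_congr e2, Nat.card_congr e3]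

private lemma myCardCompl {α : Type*} [Finite α] (P : α → Prop) :
    Nat.card α = Nat.card {a // P a} + Nat.card {a // ¬ P a} := by
  classical
  rw [Nat.card_congr (Equiv.sumCompl P).symm, Nat.card_sum]

namespace EmbGraph

variable (G : EmbGraph)

private lemma myZpow (n : ℤ) : G.α ^ n = 1 ∨ G.α ^ n = G.α := by
  have h : G.α * G.α = 1 := Equiv.ext G.α_invol
  have h2 : G.α ^ (2:ℤ) = 1 := by rw [zpow_two]; exact h
  rcases Int.even_or_odd n with ⟨m, hm⟩ | ⟨m, hm⟩
  · left; rw [hm, ← two_mul, zpow_mul, h2, one_zpow]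
  · right; rw [hm, zpow_add, zpow_mul, h2, one_zpow, one_mul, zpow_one]

private lemma myEdgeFiber (d : G.D) :
    Nat.card {d' // G.edgeOf d' = G.edgeOf d} = 2 := by
  have hset : {d' | G.edgeOf d' = G.edgeOf d} = {d, G.α d} := by
    ext x
    simp only [Set.mem_setOf_eq, Set.mem_insert_iff, Set.mem_singleton_iff]
    constructor
    · intro h
      obtain ⟨n, hn⟩ := Quotient.exact h
      rcases G.myZpow n with h1 | h1
      · left; rw [h1] at hn; simpa using hn
      · right; rw [h1] at hn
        have := congrArg G.α hn
        rwa [G.α_invol] at this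
    · rintro (rfl | rfl)
      · rfl
      · exact Quot.sound ⟨1, by simpa using G.α_invol d⟩
  have h1 : Nat.card {d' // G.edgeOf d' = G.edgeOf d}
      = ({d, G.α d} : Set G.D).ncard := by
    rw [← Nat.card_coe_set_eq, ← hset]; rfl
  rw [h1, Set.ncard_pair (Ne.symm (G.α_ne d))]

private lemma myVtxSigma (d : G.D) : G.vtx (G.σ d) = G.vtx d :=
  Quot.sound ⟨-1, by simp⟩

private lemma myVtxSigmaInv (d : G.D) : G.vtx (G.σ⁻¹ d) = G.vtx d :=
  Quot.sound ⟨1, by simp⟩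

private lemma myFaceOfPerm (d : G.D) : G.faceOf (G.facePerm d) = G.faceOf d :=
  Quot.sound ⟨-1, by simp⟩

private lemma myFaceOfPermInv (d : G.D) : G.faceOf (G.facePerm⁻¹ d) = G.faceOf d :=
  Quot.sound ⟨1, by simp⟩

private lemma myAlphaInv : G.α⁻¹ = G.α :=
  inv_eq_of_mul_eq_one_right (Equiv.ext G.α_invol)

end EmbGraph

end Aux

set_option maxHeartbeats 1000000

/-- as before but with `k ≥ 3` and at most one face of size `2`:
`i ≥ (k-1)/(k-2) - (2k/(k-2))·g + |V₂|`. -/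
theorem small_faces_bound_two
    (G : EmbGraph) (hconn : G.Connected)
    (v0 : G.Vert)
    (hbip : ∀ d : G.D, G.vtx d = v0 ↔ G.vtx (G.α d) ≠ v0)
    (hdeg : ∀ u : G.Vert, u ≠ v0 → 2 ≤ G.degree u)
    (g : ℕ) (heuler : G.eulerChar = 2 - 2 * (g : ℤ))
    (k : ℕ) (hk : 3 ≤ k)
    (h2 : Nat.card {f : G.Face // G.faceSize f = 2} ≤ 1)
    (i : ℕ) (hi : i = Nat.card {f : G.Face // G.faceSize f < 2 * k}) :
    ((k : ℚ) - 1) / ((k : ℚ) - 2) - (2 * (k : ℚ) / ((k : ℚ) - 2)) * (g : ℚ)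
      + ((Nat.card G.Vert : ℚ) - 1) ≤ (i : ℚ) := by
  classical
  letI : Fintype G.D := Fintype.ofFinite _
  letI : Fintype G.Vert := Fintype.ofFinite _
  letI : Fintype G.Edge := Fintype.ofFinite _
  letI : Fintype G.Face := Fintype.ofFinite _
  rw [EmbGraph.eulerChar, EmbGraph.numVertices, EmbGraph.numEdges,
    EmbGraph.numFaces] at heuler
  set n := Nat.card G.D with hn
  set v := Nat.card G.Vert with hv
  set e := Nat.card G.Edge with he
  set F := Nat.card G.Face with hF
  clear_value n v e F
  -- n = 2 e
  have hD2e : n = 2 * e := by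
    have hsum : ∑ E : G.Edge, Nat.card {d // G.edgeOf d = E} = n := by rw [hn]; exact mySumFiber G.edgeOf
    have h2' : ∀ E : G.Edge, Nat.card {d // G.edgeOf d = E} = 2 := by
      intro E
      induction E using Quotient.ind with
      | _ d => exact G.myEdgeFiber d
    rw [← hsum]
    simp only [h2']
    rw [Finset.sum_const, smul_eq_mul, Finset.card_univ, he, Nat.card_eq_fintype_card]
    ring
  -- n = 2 * degree v0
  have hdeg0 : n = 2 * G.degree v0 := by
    have hequiv : {d : G.D // ¬ G.vtx d = v0} ≃ {d : G.D // G.vtx d = v0} :=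
      { toFun := fun x => ⟨G.α x.1, (hbip (G.α x.1)).mpr (by rw [G.α_invol]; exact x.2)⟩
        invFun := fun x => ⟨G.α x.1, (hbip x.1).mp x.2⟩
        left_inv := fun x => Subtype.ext (G.α_invol x.1)
        right_inv := fun x => Subtype.ext (G.α_invol x.1) }
    have hc := myCardCompl (fun d : G.D => G.vtx d = v0)
    rw [Nat.card_congr hequiv] at hc
    rw [EmbGraph.degree]
    omega
  -- sum of degrees
  have hdegsum : ∑ u : G.Vert, G.degree u = n := by
    simp only [EmbGraph.degree]; rw [hn]; exact mySumFiber G.vtx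
  have hv1 : 1 ≤ v := by
    have : Nonempty G.Vert := ⟨v0⟩
    rw [hv]; exact Nat.card_pos
  have hEdegsum : ∑ u ∈ Finset.univ.erase v0, G.degree u + G.degree v0 = n := by
    rw [← hdegsum]
    exact Finset.sum_erase_add _ _ (Finset.mem_univ v0)
  have h2v : (Finset.univ.erase v0).card * 2 ≤ ∑ u ∈ Finset.univ.erase v0, G.degree u := by
    have := Finset.card_nsmul_le_sum (Finset.univ.erase v0) G.degree 2
      (fun u hu => hdeg u (Finset.ne_of_mem_erase hu))
    simpa [smul_eq_mul] using this
  have hcarderase : (Finset.univ.erase v0).card = v - 1 := by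
    rw [Finset.card_erase_of_mem (Finset.mem_univ v0), Finset.card_univ, hv,
      Nat.card_eq_fintype_card]
  have he2v : e + 2 * v ≤ n + 2 := by
    rw [hcarderase] at h2v
    omega
  -- faces
  have hfsum : ∑ f : G.Face, G.faceSize f = n := by
    simp only [EmbGraph.faceSize]; rw [hn]; exact mySumFiber G.faceOf
  have hfpos : ∀ f : G.Face, 1 ≤ G.faceSize f := by
    intro f
    induction f using Quotient.ind with
    | _ d =>
      haveI : Nonempty {d' // G.faceOf d' = Quotient.mk (G.sameCycleSetoid G.facePerm) d} :=
        ⟨⟨d, rfl⟩⟩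
      exact Nat.card_pos
  have hfeven : ∀ f : G.Face, ∃ m, 1 ≤ m ∧ G.faceSize f = 2 * m := by
    intro f
    have hpart := myCardPartition (fun d : G.D => G.faceOf d = f) (fun d => G.vtx d = v0)
    have hequiv : {d : G.D // G.faceOf d = f ∧ G.vtx d = v0}
        ≃ {d : G.D // G.faceOf d = f ∧ ¬ G.vtx d = v0} :=
      { toFun := fun x => ⟨G.facePerm x.1, by
          refine ⟨by rw [G.myFaceOfPerm]; exact x.2.1, ?_⟩
          have hfp : G.facePerm x.1 = G.σ (G.α x.1) := rfl
          rw [hfp, G.myVtxSigma]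
          exact (hbip x.1).mp x.2.2⟩
        invFun := fun x => ⟨G.facePerm⁻¹ x.1, by
          refine ⟨by rw [G.myFaceOfPermInv]; exact x.2.1, ?_⟩
          have hfp : G.facePerm⁻¹ x.1 = G.α (G.σ⁻¹ x.1) := by
            rw [EmbGraph.facePerm, mul_inv_rev, G.myAlphaInv]; rfl
          rw [hfp]
          by_contra hc
          have h1 : G.vtx (G.σ⁻¹ x.1) = v0 := (hbip _).mpr hc
          rw [G.myVtxSigmaInv] at h1
          exact x.2.2 h1⟩
        left_inv := fun x => Subtype.ext (by simp)
        right_inv := fun x => Subtype.ext (by simp) }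
    refine ⟨Nat.card {d : G.D // G.faceOf d = f ∧ G.vtx d = v0}, ?_, ?_⟩
    · have h1 := hfpos f
      rw [EmbGraph.faceSize] at h1
      rw [hpart, ← Nat.card_congr hequiv] at h1
      omega
    · rw [EmbGraph.faceSize, hpart, Nat.card_congr hequiv.symm]
      ring
  have hfge2 : ∀ f : G.Face, 2 ≤ G.faceSize f := by
    intro f; obtain ⟨m, hm1, hm2⟩ := hfeven f; omega
  have hfge4 : ∀ f : G.Face, G.faceSize f ≠ 2 → 4 ≤ G.faceSize f := by
    intro f hne; obtain ⟨m, hm1, hm2⟩ := hfeven f; omega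
  -- finset partition of faces
  set S := Finset.univ.filter (fun f : G.Face => G.faceSize f < 2 * k) with hSdef
  set S2 := Finset.univ.filter (fun f : G.Face => G.faceSize f = 2) with hS2def
  have hiS : i = S.card := by
    rw [hi, Nat.card_eq_fintype_card, Fintype.card_subtype]
  have hS2card : S2.card ≤ 1 := by
    rwa [Nat.card_eq_fintype_card, Fintype.card_subtype] at h2
  have hsub : S2 ⊆ S := by
    intro f hf
    simp only [hSdef, hS2def, Finset.mem_filter, Finset.mem_univ, true_and] at hf ⊢
    omega
  have hsumsplit : ∑ f ∈ S \ S2, G.faceSize f + ∑ f ∈ S2, G.faceSize f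
      = ∑ f ∈ S, G.faceSize f := Finset.sum_sdiff hsub
  have hsumsplit2 : ∑ f ∈ Finset.univ \ S, G.faceSize f + ∑ f ∈ S, G.faceSize f
      = ∑ f : G.Face, G.faceSize f := Finset.sum_sdiff (Finset.subset_univ S)
  have hcards : (S \ S2).card + S2.card = S.card := Finset.card_sdiff_add_card_eq_card hsub
  have hcards2 : (Finset.univ \ S).card + S.card = F := by
    rw [Finset.card_sdiff_add_card_eq_card (Finset.subset_univ S), Finset.card_univ, hF,
      Nat.card_eq_fintype_card]
  have hsumA : (S \ S2).card * 4 ≤ ∑ f ∈ S \ S2, G.faceSize f := by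
    have := Finset.card_nsmul_le_sum (S \ S2) G.faceSize 4 (fun f hf => by
      simp only [Finset.mem_sdiff, hS2def, Finset.mem_filter, Finset.mem_univ,
        true_and] at hf
      exact hfge4 f hf.2)
    simpa [smul_eq_mul] using this
  have hsumB : S2.card * 2 ≤ ∑ f ∈ S2, G.faceSize f :=  by
    have := Finset.card_nsmul_le_sum S2 G.faceSize 2 (fun f _ => hfge2 f)
    simpa [smul_eq_mul] using this
  have hsumC : (Finset.univ \ S).card * (2 * k) ≤ ∑ f ∈ Finset.univ \ S, G.faceSize f := by
    have := Finset.card_nsmul_le_sum (Finset.univ \ S) G.faceSize (2 * k) (fun f hf => by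
      simp only [Finset.mem_sdiff, hSdef, Finset.mem_filter, Finset.mem_univ,
        true_and] at hf
      omega)
    simpa [smul_eq_mul] using this
  set t := (Finset.univ \ S).card with htdef
  -- main counting inequality: 4 i + 2 k t ≤ n + 2
  have hmainN : 4 * S.card + t * (2 * k) ≤ n + 2 := by
    have h4S : 4 * S.card ≤ ∑ f ∈ S, G.faceSize f + 2 := by omega
    omega
  -- now pass to ℚ
  have q1 : (n : ℚ) = 2 * e := by exact_mod_cast hD2e
  have q2 : (e : ℚ) + 2 * v ≤ (n : ℚ) + 2 := by exact_mod_cast he2v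
  have q3 : 4 * (i : ℚ) + (t : ℚ) * (2 * k) ≤ (n : ℚ) + 2 := by
    rw [hiS]; exact_mod_cast hmainN
  have q4 : (F : ℚ) = (i : ℚ) + (t : ℚ) := by
    rw [hiS]; exact_mod_cast (by omega : F = S.card + t)
  have q5 : (v : ℚ) - (e : ℚ) + (F : ℚ) = 2 - 2 * (g : ℚ) := by exact_mod_cast heuler
  have hkQ : (3 : ℚ) ≤ (k : ℚ) := by exact_mod_cast hk
  have ht' : (t : ℚ) = 2 - 2 * g - v + e - i := by linarith
  rw [ht'] at q3
  have hprod : (0 : ℚ) ≤ ((k : ℚ) - 1) * ((e : ℚ) - 2 * v + 2) := by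
    apply mul_nonneg <;> linarith
  have hk2 : (0 : ℚ) < (k : ℚ) - 2 := by linarith
  have hmain : ((k : ℚ) - 1) - 2 * k * g ≤ ((i : ℚ) - v + 1) * ((k : ℚ) - 2) := by
    nlinarith [q3, hprod, q1, q2, q5]
  have e1 : ((k : ℚ) - 1) / ((k : ℚ) - 2) - (2 * (k : ℚ) / ((k : ℚ) - 2)) * (g : ℚ)
      + ((v : ℚ) - 1)
      = (((k : ℚ) - 1) - 2 * k * g + ((v : ℚ) - 1) * ((k : ℚ) - 2)) / ((k : ℚ) - 2) := by
    have hne2 : (k : ℚ) - 2 ≠ 0 := ne_of_gt hk2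
    field_simp
    try ring
  rw [e1, div_le_iff₀ hk2]
  nlinarith [hmain]
end

section
/- Let G be a connected embedded simple graph in which every vertex has degree at least 2. Then every face of size at most 5 is simple, i.e., each vertex occurring in the facial walk of such a face occurs in exactly two directed edges of that face. -/
namespace EmbGraph

variable {G : EmbGraph}

lemma aux_card_le_one {β : Type*} (h : Subsingleton β) : Nat.card β ≤ 1 := by
  rcases isEmpty_or_nonempty β with he | hne
  · simp [Nat.card_of_isEmpty]
  · rw [Nat.card_unique]

lemma aux_vtx_sigma (x : G.D) : G.vtx (G.σ x) = G.vtx x :=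
  (Quotient.sound (⟨1, by simp⟩ : (G.sameCycleSetoid G.σ) x (G.σ x))).symm

lemma aux_vtx_eq_iff {x y : G.D} : G.vtx x = G.vtx y ↔ G.σ.SameCycle x y :=
  ⟨fun h => Quotient.exact h, fun h => Quotient.sound h⟩

lemma aux_alpha_sameCycle {x y : G.D} (h : G.α.SameCycle x y) : y = x ∨ y = G.α x := by
  have h2 : G.α * G.α = 1 := by
    ext z; simp [G.α_invol z]
  obtain ⟨i, hi⟩ := h
  have h2' : G.α ^ (2 : ℤ) = 1 := by rw [zpow_two, h2]
  rcases Int.even_or_odd i with ⟨k, hk⟩ | ⟨k, hk⟩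
  · left
    have : G.α ^ i = 1 := by
      rw [hk, ← two_mul, zpow_mul, h2', one_zpow]
    rw [this] at hi; simpa using hi.symm
  · right
    have : G.α ^ i = G.α := by
      rw [hk, zpow_add, zpow_mul, h2', one_zpow, one_mul, zpow_one]
    rw [this] at hi; exact hi.symm

lemma aux_sigma_ne (hdeg : ∀ v : G.Vert, 2 ≤ G.degree v) (x : G.D) : G.σ x ≠ x := by
  intro hfix
  have hsub : ∀ y : {d : G.D // G.vtx d = G.vtx x}, (y : G.D) = x := by
    rintro ⟨y, hy⟩
    obtain ⟨i, hi⟩ := (aux_vtx_eq_iff.mp hy : G.σ.SameCycle y x)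
    have h4 := Equiv.Perm.zpow_apply_eq_self_of_apply_eq_self hfix (-i)
    rw [← hi] at h4
    simp only [← Equiv.Perm.mul_apply, ← zpow_add] at h4
    simp at h4
    rw [hi] at h4
    exact h4
  have hle : G.degree (G.vtx x) ≤ 1 := by
    rw [EmbGraph.degree]
    exact aux_card_le_one ⟨fun a b => Subtype.ext ((hsub a).trans (hsub b).symm)⟩
  have := hdeg (G.vtx x)
  omega

lemma aux_key (G : EmbGraph) (hsimple : G.IsSimple)
    (hdeg : ∀ v : G.Vert, 2 ≤ G.degree v) (d d' : G.D) (hne : d ≠ d')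
    (hcyc : G.facePerm.SameCycle d d') (hv : G.vtx d = G.vtx d')
    (hf : G.faceSize (G.faceOf d) ≤ 5) : False := by
  classical
  letI : Fintype G.D := Fintype.ofFinite _
  set φ := G.facePerm with hφ
  have hφd : ∀ x : G.D, φ x = G.σ (G.α x) := fun x => rfl
  -- the step lemma: no two darts at distance 1 or 2 along a face share a tail
  have step : ∀ a b : G.D, a ≠ b → G.vtx a = G.vtx b →
      (φ a = b ∨ φ (φ a) = b) → False := by
    rintro a b hab hvab (h1 | h2)
    · -- distance 1: loop
      have : G.vtx a = G.vtx (G.α a) := by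
        rw [hvab, ← h1, hφd, aux_vtx_sigma]
      exact hsimple.1 a this
    · -- distance 2
      set e := φ a with he
      have hv1 : G.vtx (G.α a) = G.vtx e := by
        rw [he, hφd, aux_vtx_sigma]
      have hv2 : G.vtx (G.α (G.α a)) = G.vtx (G.α e) := by
        rw [G.α_invol, hvab, ← h2, hφd, aux_vtx_sigma]
      have hedge := hsimple.2 (G.α a) e hv1 hv2
      rcases aux_alpha_sameCycle (Quotient.exact hedge : G.α.SameCycle (G.α a) e) with
        hea | hea
      · -- e = α a : fixed point of σ
        have : G.σ (G.α a) = G.α a := by rw [← hφd, ← he, hea]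
        exact aux_sigma_ne hdeg (G.α a) this
      · -- e = α (α a) = a : face of size 1 step, contradiction with a ≠ b
        rw [G.α_invol] at hea
        have hfa : φ a = a := he.symm.trans hea
        apply hab
        rw [← h2, he, hfa, hfa]
  -- non-fixed point of φ
  have hdne : φ d ≠ d := by
    intro h
    exact hsimple.1 d (by rw [← aux_vtx_sigma (G.α d)]; rw [hφd] at h; rw [h])
  have hdsupp : d ∈ φ.support := Equiv.Perm.mem_support.mpr hdne
  -- face size equals the cycle length
  set n := (φ.cycleOf d).support.card with hn
  have hsize : G.faceSize (G.faceOf d) = n := by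
    rw [EmbGraph.faceSize, hn, ← Nat.card_eq_finsetCard]
    apply Nat.card_congr
    apply Equiv.subtypeEquivRight
    intro x
    rw [Equiv.Perm.mem_support_cycleOf_iff]
    constructor
    · intro hx
      exact ⟨(Quotient.exact hx.symm : φ.SameCycle d x), hdsupp⟩
    · intro hx
      exact (Quotient.sound hx.1.symm : G.faceOf x = G.faceOf d)
  have hn5 : n ≤ 5 := by rw [← hsize]; exact hf
  -- get the exponent
  obtain ⟨k, hk, hkd⟩ := Equiv.Perm.SameCycle.exists_pow_eq_of_mem_support hcyc hdsupp
  have hk0 : k ≠ 0 := by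
    rintro rfl; exact hne (by simpa using hkd)
  have hret : (φ ^ n) d = d := by
    have h5 := Equiv.Perm.pow_mod_card_support_cycleOf_self_apply φ n d
    rw [← hn, Nat.mod_self, pow_zero, Equiv.Perm.coe_one, id_eq] at h5
    exact h5.symm
  by_cases hk2 : k ≤ 2
  · -- d' is 1 or 2 steps after d
    apply step d d' hne hv
    rcases (by omega : k = 1 ∨ k = 2) with rfl | rfl
    · left; simpa using hkd
    · right; rw [← hkd, pow_two, Equiv.Perm.mul_apply]
  · -- d is 1 or 2 steps after d'
    have hmk : (φ ^ (n - k)) d' = d := by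
      rw [← hkd, ← Equiv.Perm.mul_apply, ← pow_add]
      rw [Nat.sub_add_cancel hk.le]
      exact hret
    apply step d' d (Ne.symm hne) hv.symm
    rcases (by omega : n - k = 1 ∨ n - k = 2) with h | h <;> rw [h] at hmk
    · left; simpa using hmk
    · right; rw [← hmk, pow_two, Equiv.Perm.mul_apply]

end EmbGraph

/-- in a connected embedded simple graph with minimum degree at
least `2`, every face of size at most `5` is simple: each vertex occurs at most
once as a tail (equivalently, in exactly two directed edges) in its facial walk. -/
theorem small_faces_are_simple
    (G : EmbGraph) (hconn : G.Connected) (hsimple : G.IsSimple)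
    (hdeg : ∀ v : G.Vert, 2 ≤ G.degree v)
    (f : G.Face) (hf : G.faceSize f ≤ 5) :
    ∀ v : G.Vert, Nat.card {d : G.D // G.faceOf d = f ∧ G.vtx d = v} ≤ 1 := by
  classical
  intro v
  apply EmbGraph.aux_card_le_one
  constructor
  rintro ⟨d, hdf, hdv⟩ ⟨d', hdf', hdv'⟩
  have hmain : d = d' := by
    by_contra hne
    exact EmbGraph.aux_key G hsimple hdeg d d' hne
      (Quotient.exact ((hdf.trans hdf'.symm) : G.faceOf d = G.faceOf d'))
      (hdv.trans hdv'.symm) (by rw [hdf]; exact hf)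
  simp [hmain]
end
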